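/- arXiv:1411.7696 — 3 statements merged into one kernel-verified Lean document; each statement's English description precedes it below -/
import Mathlib

section
/- Let f ∈ ℝ[X] be a Morse polynomial function in n variables such that f(x) ≥ 0 for every x in some neighborhood U of the origin 0 ∈ ℝⁿ and f⁻¹(0) = {0}. Then f, regarded as an element of ℝ[[X]] under the natural inclusion ℝ[X] ⊆ ℝ[[X]], is a finite sum of squares of formal power series, i.e. f ∈ Σℝ[[X]]². -/
section P1
open Polynomial Topology Filter


lemma oneDim (P : Polynomial ℝ) (h0 : P.eval 0 = 0)
    (hpos : ∀ᶠ t in 𝓝 (0:ℝ), 0 ≤ P.eval t) : P.coeff 1 = 0 ∧ 0 ≤ P.coeff 2 := by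
  set P₁ := P.divX with hP₁def
  have hP : P = P₁ * X := by
    conv_lhs => rw [← divX_mul_X_add P]
    rw [coeff_zero_eq_eval_zero, h0]; simp [hP₁def]
  have hev1 : ∀ t : ℝ, P.eval t = P₁.eval t * t := by intro t; conv_lhs => rw [hP]; simp
  have hc1 : P.coeff 1 = P₁.eval 0 := by rw [← coeff_zero_eq_eval_zero, coeff_divX]
  have tend : Tendsto (fun t => P₁.eval t) (𝓝 0) (𝓝 (P₁.eval 0)) := P₁.continuous.tendsto 0
  have h1 : P₁.eval 0 = 0 := by
    have hle : P₁.eval 0 ≤ 0 := by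
      apply le_of_tendsto (tend.mono_left (nhdsWithin_le_nhds : 𝓝[<] (0:ℝ) ≤ 𝓝 0))
      filter_upwards [eventually_nhdsWithin_of_eventually_nhds hpos, self_mem_nhdsWithin]
        with t ht ht'
      rw [hev1 t] at ht
      nlinarith [ht, Set.mem_Iio.mp ht']
    have hge : 0 ≤ P₁.eval 0 := by
      apply ge_of_tendsto (tend.mono_left (nhdsWithin_le_nhds : 𝓝[>] (0:ℝ) ≤ 𝓝 0))
      filter_upwards [eventually_nhdsWithin_of_eventually_nhds hpos, self_mem_nhdsWithin]
        with t ht ht'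
      rw [hev1 t] at ht
      nlinarith [ht, Set.mem_Ioi.mp ht']
    linarith
  set P₂ := P₁.divX with hP₂def
  have hP1 : P₁ = P₂ * X := by
    conv_lhs => rw [← divX_mul_X_add P₁]
    rw [coeff_zero_eq_eval_zero, h1]; simp [hP₂def]
  have hc2 : P.coeff 2 = P₂.eval 0 := by
    rw [← coeff_zero_eq_eval_zero, hP₂def, coeff_divX, hP₁def, coeff_divX]
  have h2 : 0 ≤ P₂.eval 0 := by
    apply ge_of_tendsto ((P₂.continuous.tendsto 0).mono_left
      (nhdsWithin_le_nhds : 𝓝[≠] (0:ℝ) ≤ 𝓝 0))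
    filter_upwards [eventually_nhdsWithin_of_eventually_nhds hpos, self_mem_nhdsWithin]
      with t ht ht'
    have hev2 : P.eval t = P₂.eval t * (t * t) := by
      rw [hev1 t]; conv_lhs => rw [hP1]
      simp; ring
    rw [hev2] at ht
    have htt : 0 < t * t := mul_self_pos.mpr (Set.mem_compl_singleton_iff.mp ht')
    nlinarith [ht, htt]
  exact ⟨hc1 ▸ h1, hc2 ▸ h2⟩
end P1

section P2
open MvPolynomial


lemma exists_decomp (n : ℕ) (f : MvPolynomial (Fin n) ℝ) :
    ∃ (c : ℝ) (L : Fin n → ℝ) (H : Matrix (Fin n) (Fin n) (MvPolynomial (Fin n) ℝ)),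
      f = C c + ∑ i, C (L i) * X i + ∑ i, ∑ j, X i * X j * H i j := by
  induction f using MvPolynomial.induction_on with
  | C a => exact ⟨a, 0, 0, by simp⟩
  | add p q hp hq =>
      obtain ⟨c, L, H, rfl⟩ := hp; obtain ⟨c', L', H', rfl⟩ := hq
      refine ⟨c + c', L + L', H + H', ?_⟩
      simp only [Pi.add_apply, Matrix.add_apply, map_add, add_mul, mul_add,
        Finset.sum_add_distrib]
      ring
  | mul_X p i hp =>
      obtain ⟨c, L, H, rfl⟩ := hp
      refine ⟨0, (fun j => if j = i then c else 0),
        (fun j k => (if k = i then C (L j) else 0) + H j k * X i), ?_⟩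
      have e1 : (∑ j, C (if j = i then c else 0) * X j : MvPolynomial (Fin n) ℝ)
          = C c * X i := by
        rw [Finset.sum_eq_single i]
        · simp
        · intro b _ hb; simp [hb]
        · simp
      have e2 : ∀ j : Fin n, (∑ k, X j * X k * (if k = i then C (L j) else 0)
          : MvPolynomial (Fin n) ℝ) = X j * X i * C (L j) := by
        intro j
        rw [Finset.sum_eq_single i]
        · simp
        · intro b _ hb; simp [hb]
        · simp
      simp only [mul_add, Finset.sum_add_distrib, e2, map_zero, e1]
      rw [add_mul, add_mul, Finset.sum_mul, Finset.sum_mul]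
      have e3 : ∀ j : Fin n, (C (L j) * X j) * X i = X j * X i * C (L j) := fun j => by ring
      have e4 : ∀ j : Fin n, (∑ k, X j * X k * H j k) * X i
          = ∑ k, X j * X k * (H j k * X i) := by
        intro j; rw [Finset.sum_mul]; exact Finset.sum_congr rfl fun k _ => by ring
      simp only [e3, e4]
      ring
end P2

noncomputable section P3
open Finset

variable (n : ℕ)

/-- total degree of a monomial exponent -/
def mdeg (d : Fin n →₀ ℕ) : ℕ := ∑ i, d i

lemma mdeg_add (a b : Fin n →₀ ℕ) : mdeg n (a + b) = mdeg n a + mdeg n b := by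
  simp [mdeg, Finsupp.add_apply, Finset.sum_add_distrib]

lemma mdeg_pos {a : Fin n →₀ ℕ} (h : a ≠ 0) : 0 < mdeg n a := by
  obtain ⟨i, hi⟩ : ∃ i, a i ≠ 0 := by
    by_contra hc; push_neg at hc; exact h (Finsupp.ext hc)
  calc 0 < a i := Nat.pos_of_ne_zero hi
    _ ≤ mdeg n a := Finset.single_le_sum (f := fun j => a j) (fun _ _ => Nat.zero_le _)
        (Finset.mem_univ i)

/-- coefficients of the square root of a power series -/
def sqC (u : MvPowerSeries (Fin n) ℝ) (r : ℝ) : (Fin n →₀ ℕ) → ℝ := fun d =>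
  if h : d = 0 then r else
    (MvPowerSeries.coeff d u -
      ∑ p ∈ ((antidiagonal d).filter fun p => p.1 ≠ 0 ∧ p.2 ≠ 0).attach,
        sqC u r p.1.1 * sqC u r p.1.2) / (2 * r)
  termination_by d => mdeg n d
  decreasing_by
  · have hm := p.2
    simp only [mem_filter, Finset.HasAntidiagonal.mem_antidiagonal] at hm
    obtain ⟨hsum, h1, h2⟩ := hm
    have := mdeg_add n p.1.1 p.1.2
    rw [hsum] at this
    have := mdeg_pos n h2
    omega
  · have hm := p.2
    simp only [mem_filter, Finset.HasAntidiagonal.mem_antidiagonal] at hm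
    obtain ⟨hsum, h1, h2⟩ := hm
    have := mdeg_add n p.1.1 p.1.2
    rw [hsum] at this
    have := mdeg_pos n h1
    omega

lemma sq_exists (u : MvPowerSeries (Fin n) ℝ)
    (hpos : 0 < MvPowerSeries.constantCoeff u) :
    ∃ s : MvPowerSeries (Fin n) ℝ, s * s = u := by
  classical
  set c := MvPowerSeries.constantCoeff u with hc
  set r := Real.sqrt c with hr
  have hrpos : 0 < r := Real.sqrt_pos.mpr hpos
  set s : MvPowerSeries (Fin n) ℝ := fun d => sqC n u r d with hs
  have hcoeff : ∀ d, MvPowerSeries.coeff d s = sqC n u r d := fun d => rfl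
  refine ⟨s, ?_⟩
  ext d
  rw [MvPowerSeries.coeff_mul]
  by_cases hd : d = 0
  · subst hd
    rw [Finsupp.antidiagonal_zero, Finset.sum_singleton]
    have hs0 : MvPowerSeries.coeff 0 s = r := by rw [hcoeff, sqC, dif_pos rfl]
    show MvPowerSeries.coeff 0 s * MvPowerSeries.coeff 0 s = _
    rw [hs0, hr, Real.mul_self_sqrt hpos.le]
    rw [hc, ← MvPowerSeries.coeff_zero_eq_constantCoeff_apply]
  · -- split antidiagonal
    set T := (antidiagonal d).filter fun p : (Fin n →₀ ℕ) × (Fin n →₀ ℕ) => p.1 ≠ 0 ∧ p.2 ≠ 0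
      with hT
    have hsplit : antidiagonal d = T ∪ {((0 : Fin n →₀ ℕ), d), (d, 0)} := by
      ext p
      simp only [hT, Finset.mem_union, Finset.mem_filter, Finset.HasAntidiagonal.mem_antidiagonal,
        Finset.mem_insert, Finset.mem_singleton]
      constructor
      · intro hp
        by_cases h1 : p.1 = 0
        · right; left; rw [Prod.ext_iff]; simp [h1, ← hp, h1]
        · by_cases h2 : p.2 = 0
          · right; right; rw [Prod.ext_iff]; simp [h2, ← hp, h2]
          · exact Or.inl ⟨hp, h1, h2⟩
      · rintro (⟨hp, _⟩ | h | h) <;> simp_all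
    have hdisj : Disjoint T ({((0 : Fin n →₀ ℕ), d), (d, 0)} : Finset _) := by
      rw [Finset.disjoint_right]
      intro p hp
      simp only [Finset.mem_insert, Finset.mem_singleton] at hp
      simp only [hT, Finset.mem_filter, not_and]
      rcases hp with h | h <;> (subst h; simp [hd])
    rw [hsplit, Finset.sum_union hdisj]
    have hpair : (((0 : Fin n →₀ ℕ), d) : _) ≠ (d, 0) := by
      intro hcon; rw [Prod.ext_iff] at hcon; exact hd hcon.1.symm
    rw [Finset.sum_pair hpair]
    have hs0 : MvPowerSeries.coeff 0 s = r := by rw [hcoeff, sqC, dif_pos rfl]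
    have hsd : MvPowerSeries.coeff d s =
        (MvPowerSeries.coeff d u - ∑ p ∈ T.attach, sqC n u r p.1.1 * sqC n u r p.1.2)
          / (2 * r) := by
      rw [hcoeff]
      conv_lhs => rw [sqC]
      rw [dif_neg hd]
    have hTsum : ∑ p ∈ T, MvPowerSeries.coeff p.1 s * MvPowerSeries.coeff p.2 s
        = ∑ p ∈ T.attach, sqC n u r p.1.1 * sqC n u r p.1.2 := by
      rw [← Finset.sum_attach T (fun p => MvPowerSeries.coeff p.1 s
        * MvPowerSeries.coeff p.2 s)]
      exact Finset.sum_congr rfl fun p _ => by rw [hcoeff, hcoeff]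
    rw [hTsum, hs0, hsd]
    field_simp
    ring
end P3

section P4
open Finset Matrix


lemma quad_eq {m : ℕ} (A : Matrix (Fin m) (Fin m) ℝ) (x : Fin m → ℝ) :
    x ⬝ᵥ A.mulVec x = ∑ i, ∑ j, x i * x j * A i j := by
  simp only [dotProduct, Matrix.mulVec, Finset.mul_sum]
  exact Finset.sum_congr rfl fun i _ => Finset.sum_congr rfl fun j _ => by ring

lemma expand_succ {m : ℕ} (B : Matrix (Fin (m+1)) (Fin (m+1)) ℝ) (u : Fin (m+1) → ℝ) :
    ∑ i, ∑ j, u i * u j * B i j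
      = u 0 * u 0 * B 0 0 + (∑ j : Fin m, u 0 * u j.succ * B 0 j.succ)
        + ((∑ i : Fin m, u i.succ * u 0 * B i.succ 0)
        + ∑ i : Fin m, ∑ j : Fin m, u i.succ * u j.succ * B i.succ j.succ) := by
  simp only [Fin.sum_univ_succ, Finset.sum_add_distrib]
  ring

lemma schur_posDef {m : ℕ} (A : Matrix (Fin (m+1)) (Fin (m+1)) ℝ)
    (hsym : ∀ i j, A i j = A j i) (hA : A.PosDef) :
    Matrix.PosDef (Matrix.of fun i j : Fin m =>
      A i.succ j.succ - (A 0 0)⁻¹ * (A 0 i.succ * A 0 j.succ)) := by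
  have hstar : ∀ (k : ℕ) (v : Fin k → ℝ), star v = v := fun k v => star_trivial v
  have ha : 0 < A 0 0 := by
    have h1 : (Pi.single 0 1 : Fin (m+1) → ℝ) ≠ 0 := by
      intro hcon
      have := congrFun hcon 0
      simp at this
    have h2 := hA.dotProduct_mulVec_pos h1
    rw [hstar, Matrix.mulVec_single, single_dotProduct] at h2
    simpa using h2
  have hane : A 0 0 ≠ 0 := ne_of_gt ha
  refine Matrix.PosDef.of_dotProduct_mulVec_pos ?_ ?_
  · rw [Matrix.IsHermitian]
    ext i j
    simp only [Matrix.conjTranspose_apply, Matrix.of_apply, star_trivial]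
    rw [hsym j.succ i.succ]; ring
  · intro v hv
    rw [hstar]
    set a := A 0 0 with hadef
    set T : ℝ := ∑ j, A 0 j.succ * v j with hT
    set w : Fin (m+1) → ℝ := Fin.cases (-a⁻¹ * T) v with hw
    have hw0 : w 0 = -a⁻¹ * T := rfl
    have hws : ∀ i : Fin m, w i.succ = v i := fun i => by simp [hw]
    have hwne : w ≠ 0 := by
      intro hcon
      apply hv
      funext i
      have := congrFun hcon i.succ
      rwa [hws] at this
    have key : v ⬝ᵥ (Matrix.of fun i j : Fin m =>
        A i.succ j.succ - a⁻¹ * (A 0 i.succ * A 0 j.succ)).mulVec v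
        = w ⬝ᵥ A.mulVec w := by
      rw [quad_eq, quad_eq]
      -- LHS
      have lhs_eq : ∑ i, ∑ j, v i * v j * (Matrix.of fun i j : Fin m =>
          A i.succ j.succ - a⁻¹ * (A 0 i.succ * A 0 j.succ)) i j
          = (∑ i, ∑ j, v i * v j * A i.succ j.succ) - a⁻¹ * T * T := by
        have inner : ∀ i : Fin m, ∑ j, v i * v j * (Matrix.of fun i j : Fin m =>
            A i.succ j.succ - a⁻¹ * (A 0 i.succ * A 0 j.succ)) i j
            = (∑ j, v i * v j * A i.succ j.succ) - (v i * A 0 i.succ) * (a⁻¹ * T) := by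
          intro i
          have e : ∀ j : Fin m, v i * v j * (Matrix.of fun i j : Fin m =>
              A i.succ j.succ - a⁻¹ * (A 0 i.succ * A 0 j.succ)) i j
              = v i * v j * A i.succ j.succ
                - (v i * A 0 i.succ) * a⁻¹ * (A 0 j.succ * v j) := by
            intro j; simp only [Matrix.of_apply]; ring
          rw [Finset.sum_congr rfl fun j _ => e j, Finset.sum_sub_distrib, ← Finset.mul_sum,
            ← hT]
          ring
        rw [Finset.sum_congr rfl fun i _ => inner i, Finset.sum_sub_distrib]
        congr 1
        have e2 : ∀ i : Fin m, v i * A 0 i.succ * (a⁻¹ * T)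
            = (A 0 i.succ * v i) * (a⁻¹ * T) := fun i => by ring
        rw [Finset.sum_congr rfl fun i _ => e2 i, ← Finset.sum_mul, ← hT]
        ring
      -- RHS
      have rhs_eq : ∑ i, ∑ j, w i * w j * A i j
          = (∑ i, ∑ j, v i * v j * A i.succ j.succ) - a⁻¹ * T * T := by
        rw [expand_succ]
        simp only [hw0, hws]
        have eS1 : ∑ j : Fin m, -a⁻¹ * T * v j * A 0 j.succ = -(a⁻¹ * T * T) := by
          have e : ∀ j : Fin m, -a⁻¹ * T * v j * A 0 j.succ
              = (A 0 j.succ * v j) * (-a⁻¹ * T) := fun j => by ring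
          rw [Finset.sum_congr rfl fun j _ => e j, ← Finset.sum_mul, ← hT]
          ring
        have eS2 : ∑ i : Fin m, v i * (-a⁻¹ * T) * A i.succ 0 = -(a⁻¹ * T * T) := by
          have e : ∀ i : Fin m, v i * (-a⁻¹ * T) * A i.succ 0
              = (A 0 i.succ * v i) * (-a⁻¹ * T) := fun i => by rw [hsym i.succ 0]; ring
          rw [Finset.sum_congr rfl fun i _ => e i, ← Finset.sum_mul, ← hT]
          ring
        rw [eS1, eS2]
        have : -a⁻¹ * T * (-a⁻¹ * T) * a = a⁻¹ * T * T := by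
          field_simp
        rw [this]
        ring
      rw [lhs_eq, rhs_eq]
    rw [key]
    have := hA.dotProduct_mulVec_pos hwne; rwa [hstar] at this

lemma posDef_diag {k : ℕ} (A : Matrix (Fin k) (Fin k) ℝ) (hA : A.PosDef) (i : Fin k) :
    0 < A i i := by
  have h1 : (Pi.single i 1 : Fin k → ℝ) ≠ 0 := by
    intro hcon
    have := congrFun hcon i
    simp at this
  have h2 := hA.dotProduct_mulVec_pos h1
  rw [star_trivial, Matrix.mulVec_single, single_dotProduct] at h2
  simpa using h2

lemma expand_succR {R : Type*} [CommRing R] {m : ℕ}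
    (B : Matrix (Fin (m+1)) (Fin (m+1)) R) (u : Fin (m+1) → R) :
    ∑ i, ∑ j, u i * u j * B i j
      = u 0 * u 0 * B 0 0 + (∑ j : Fin m, u 0 * u j.succ * B 0 j.succ)
        + ((∑ i : Fin m, u i.succ * u 0 * B i.succ 0)
        + ∑ i : Fin m, ∑ j : Fin m, u i.succ * u j.succ * B i.succ j.succ) := by
  simp only [Fin.sum_univ_succ, Finset.sum_add_distrib]
  ring

lemma cholesky {R : Type*} [CommRing R] (ε : R →+* ℝ)
    (hunit : ∀ r : R, ε r ≠ 0 → IsUnit r)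
    (hsqrt : ∀ r : R, 0 < ε r → ∃ s, s * s = r) :
    ∀ (m : ℕ) (H : Matrix (Fin m) (Fin m) R), (∀ i j, H i j = H j i) →
      (Matrix.PosDef (Matrix.of fun i j => ε (H i j))) → ∀ x : Fin m → R,
      IsSumSq (∑ i, ∑ j, x i * x j * H i j) := by
  intro m
  induction m with
  | zero =>
      intro H _ _ x
      simpa using IsSumSq.zero
  | succ m ih =>
      intro H hsym hpos x
      have ha : 0 < ε (H 0 0) := posDef_diag _ hpos 0
      obtain ⟨b, hb⟩ := (hunit (H 0 0) (ne_of_gt ha)).exists_right_inv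
      obtain ⟨s, hss⟩ := hsqrt (H 0 0) ha
      set S : R := ∑ j : Fin m, H 0 j.succ * x j.succ with hS
      set y : R := x 0 + b * S with hy
      set H' : Matrix (Fin m) (Fin m) R :=
        Matrix.of fun i j => H i.succ j.succ - b * (H 0 i.succ * H 0 j.succ) with hH'
      have hsym' : ∀ i j, H' i j = H' j i := by
        intro i j
        simp only [hH', Matrix.of_apply]
        rw [hsym i.succ j.succ]; ring
      have h1 : ε (H 0 0) * ε b = 1 := by rw [← _root_.map_mul, hb, _root_.map_one]
      have hεb : ε b = (ε (H 0 0))⁻¹ := eq_inv_of_mul_eq_one_left (by rw [mul_comm] at h1; exact h1)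
      have hpos' : Matrix.PosDef (Matrix.of fun i j => ε (H' i j)) := by
        have hsymA : ∀ i j : Fin (m+1), (Matrix.of fun i j => ε (H i j)) i j
            = (Matrix.of fun i j => ε (H i j)) j i := by
          intro i j; simp only [Matrix.of_apply]; rw [hsym i j]
        have hschur := schur_posDef _ hsymA hpos
        have heq : (Matrix.of fun i j : Fin m => ε (H' i j))
            = Matrix.of fun i j : Fin m =>
              (Matrix.of fun i j => ε (H i j)) i.succ j.succ
                - ((Matrix.of fun i j => ε (H i j)) 0 0)⁻¹
                  * ((Matrix.of fun i j => ε (H i j)) 0 i.succ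
                    * (Matrix.of fun i j => ε (H i j)) 0 j.succ) := by
          ext i j
          simp only [Matrix.of_apply, hH', _root_.map_sub, _root_.map_mul, hεb]
        rw [heq]
        exact hschur
      have key : ∑ i, ∑ j, x i * x j * H i j
          = (s * y) * (s * y)
            + ∑ i, ∑ j, x i.succ * x j.succ * H' i j := by
        rw [expand_succR]
        have e1 : ∑ j : Fin m, x 0 * x j.succ * H 0 j.succ = x 0 * S := by
          rw [hS, Finset.mul_sum]
          exact Finset.sum_congr rfl fun j _ => by ring
        have e2 : ∑ i : Fin m, x i.succ * x 0 * H i.succ 0 = x 0 * S := by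
          rw [hS, Finset.mul_sum]
          refine Finset.sum_congr rfl fun i _ => ?_
          rw [hsym i.succ 0]; ring
        have e3 : ∑ i, ∑ j, x i.succ * x j.succ * H' i j
            = (∑ i : Fin m, ∑ j : Fin m, x i.succ * x j.succ * H i.succ j.succ)
              - b * S * S := by
          have inner : ∀ i : Fin m, ∑ j, x i.succ * x j.succ * H' i j
              = (∑ j : Fin m, x i.succ * x j.succ * H i.succ j.succ)
                - (x i.succ * H 0 i.succ * b) * S := by
            intro i
            have e : ∀ j : Fin m, x i.succ * x j.succ * H' i j
                = x i.succ * x j.succ * H i.succ j.succ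
                  - (x i.succ * H 0 i.succ * b) * (H 0 j.succ * x j.succ) := by
              intro j; simp only [hH', Matrix.of_apply]; ring
            rw [Finset.sum_congr rfl fun j _ => e j, Finset.sum_sub_distrib, ← Finset.mul_sum,
              ← hS]
          rw [Finset.sum_congr rfl fun i _ => inner i, Finset.sum_sub_distrib]
          congr 1
          have e4 : ∀ i : Fin m, (x i.succ * H 0 i.succ * b) * S
              = (H 0 i.succ * x i.succ) * (b * S) := fun i => by ring
          rw [Finset.sum_congr rfl fun i _ => e4 i, ← Finset.sum_mul, ← hS]
          ring
        rw [e1, e2, e3]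
        have hyy : (s * y) * (s * y) = (s * s) * (y * y) := by ring
        rw [hyy, hss, hy]
        have hfin : x 0 * x 0 * H 0 0 + x 0 * S + (x 0 * S
            + ∑ i : Fin m, ∑ j : Fin m, x i.succ * x j.succ * H i.succ j.succ)
            = H 0 0 * ((x 0 + b * S) * (x 0 + b * S))
              + ((∑ i : Fin m, ∑ j : Fin m, x i.succ * x j.succ * H i.succ j.succ)
                - b * S * S) := by
          linear_combination (-(2 * x 0 * S + b * S * S)) * hb
        rw [hfin]
      rw [key]
      exact IsSumSq.sq_add _ (ih H' hsym' hpos' (fun i => x i.succ))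
end P4

noncomputable section P5
open MvPolynomial


noncomputable def lineMap (n : ℕ) (v : Fin n → ℝ) :
    MvPolynomial (Fin n) ℝ →+* Polynomial ℝ :=
  eval₂Hom Polynomial.C (fun i => Polynomial.C (v i) * Polynomial.X)

lemma lineMap_eval (n : ℕ) (v : Fin n → ℝ) (g : MvPolynomial (Fin n) ℝ) (t : ℝ) :
    (lineMap n v g).eval t = eval (t • v) g := by
  induction g using MvPolynomial.induction_on with
  | C a => simp [lineMap]
  | add p q hp hq => simp [map_add, hp, hq]
  | mul_X p i hp =>
      simp only [map_mul, lineMap, eval₂Hom_X', Polynomial.eval_mul, hp, eval_mul, eval_X,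
        Polynomial.eval_C, Polynomial.eval_X, Pi.smul_apply, smul_eq_mul]
      rw [show lineMap n v p = eval₂Hom Polynomial.C (fun i => Polynomial.C (v i) * Polynomial.X) p from rfl] at hp
      rw [hp]; ring

lemma lineMap_quad (n : ℕ) (v : Fin n → ℝ) (i j : Fin n) (h : MvPolynomial (Fin n) ℝ) :
    lineMap n v (X i * X j * h)
      = Polynomial.C (v i * v j) * (lineMap n v h * Polynomial.X ^ 2) := by
  simp only [map_mul, lineMap, eval₂Hom_X', Polynomial.C_mul]
  ring

lemma lineMap_lin (n : ℕ) (v : Fin n → ℝ) (a : ℝ) (i : Fin n) :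
    lineMap n v (C a * X i) = Polynomial.C (a * v i) * Polynomial.X := by
  simp only [map_mul, lineMap, eval₂Hom_X', eval₂Hom_C, Polynomial.C_mul]
  ring

lemma lineMap_coeff (n : ℕ) (v : Fin n → ℝ) (c : ℝ) (L : Fin n → ℝ)
    (H : Matrix (Fin n) (Fin n) (MvPolynomial (Fin n) ℝ)) :
    ((lineMap n v) (C c + ∑ i, C (L i) * X i + ∑ i, ∑ j, X i * X j * H i j)).coeff 1
        = ∑ i, L i * v i
    ∧ ((lineMap n v) (C c + ∑ i, C (L i) * X i + ∑ i, ∑ j, X i * X j * H i j)).coeff 2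
        = ∑ i, ∑ j, v i * v j * eval 0 (H i j) := by
  have hCc : lineMap n v (C c) = Polynomial.C c := by simp [lineMap]
  have hrw : (lineMap n v) (C c + ∑ i, C (L i) * X i + ∑ i, ∑ j, X i * X j * H i j)
      = Polynomial.C c + (∑ i, Polynomial.C (L i * v i) * Polynomial.X)
        + ∑ i, ∑ j, Polynomial.C (v i * v j) * (lineMap n v (H i j) * Polynomial.X ^ 2) := by
    rw [map_add, map_add, map_sum, map_sum, hCc]
    congr 1
    · congr 1
      · exact Finset.sum_congr rfl fun i _ => lineMap_lin n v (L i) i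
    · refine Finset.sum_congr rfl fun i _ => ?_
      rw [map_sum]
      exact Finset.sum_congr rfl fun j _ => lineMap_quad n v i j (H i j)
  have hcoeff0 : ∀ g : MvPolynomial (Fin n) ℝ, (lineMap n v g).coeff 0 = eval 0 g := by
    intro g
    rw [Polynomial.coeff_zero_eq_eval_zero, lineMap_eval, zero_smul]
  constructor
  · rw [hrw]
    rw [Polynomial.coeff_add, Polynomial.coeff_add, Polynomial.finset_sum_coeff,
      Polynomial.finset_sum_coeff]
    have e1 : ∀ i : Fin n, (Polynomial.C (L i * v i) * Polynomial.X).coeff 1 = L i * v i := by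
      intro i; rw [Polynomial.coeff_C_mul, Polynomial.coeff_X_one, mul_one]
    have e2 : ∀ i : Fin n, (∑ j, Polynomial.C (v i * v j)
        * (lineMap n v (H i j) * Polynomial.X ^ 2)).coeff 1 = 0 := by
      intro i
      rw [Polynomial.finset_sum_coeff]
      refine Finset.sum_eq_zero fun j _ => ?_
      rw [Polynomial.coeff_C_mul, Polynomial.coeff_mul_X_pow']
      norm_num
    rw [Finset.sum_congr rfl fun i _ => e1 i, Finset.sum_congr rfl fun i _ => e2 i]
    simp [Polynomial.coeff_C]
  · rw [hrw]
    rw [Polynomial.coeff_add, Polynomial.coeff_add, Polynomial.finset_sum_coeff,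
      Polynomial.finset_sum_coeff]
    have e1 : ∀ i : Fin n, (Polynomial.C (L i * v i) * Polynomial.X).coeff 2 = 0 := by
      intro i; rw [Polynomial.coeff_C_mul, Polynomial.coeff_X]; norm_num
    have e2 : ∀ i : Fin n, (∑ j, Polynomial.C (v i * v j)
        * (lineMap n v (H i j) * Polynomial.X ^ 2)).coeff 2
        = ∑ j, v i * v j * eval 0 (H i j) := by
      intro i
      rw [Polynomial.finset_sum_coeff]
      refine Finset.sum_congr rfl fun j _ => ?_
      rw [Polynomial.coeff_C_mul, Polynomial.coeff_mul_X_pow', if_pos (le_refl 2)]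
      show v i * v j * ((lineMap n v) (H i j)).coeff 0 = _
      rw [hcoeff0]
    rw [Finset.sum_congr rfl fun i _ => e1 i, Finset.sum_congr rfl fun i _ => e2 i]
    simp [Polynomial.coeff_C]
end P5

section P6
open MvPolynomial


lemma eval0_pderiv_quad (n : ℕ) (k i j : Fin n) (h : MvPolynomial (Fin n) ℝ) :
    eval 0 (pderiv k (X i * X j * h)) = 0 := by
  simp [pderiv_mul]

lemma eval0_pderiv2_quad (n : ℕ) (k l i j : Fin n) (h : MvPolynomial (Fin n) ℝ) :
    eval 0 (pderiv k (pderiv l (X i * X j * h)))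
      = (if l = i then 1 else 0) * (if k = j then 1 else 0) * eval 0 h
        + (if l = j then 1 else 0) * (if k = i then 1 else 0) * eval 0 h := by
  by_cases hli : l = i <;> by_cases hlj : l = j <;> by_cases hkj : k = j <;> by_cases hki : k = i <;>
    subst_vars <;> simp [pderiv_mul, pderiv_X, *] <;> ring
end P6

open MvPolynomial

/-- The Hessian matrix of a polynomial `f` at a point `p`. -/
noncomputable def hessian (n : ℕ) (f : MvPolynomial (Fin n) ℝ) (p : Fin n → ℝ) :
    Matrix (Fin n) (Fin n) ℝ :=
  fun i j => eval p (pderiv j (pderiv i f))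

/-- A polynomial is Morse if its Hessian matrix is invertible at every critical point. -/
def IsMorse (n : ℕ) (f : MvPolynomial (Fin n) ℝ) : Prop :=
  ∀ p : Fin n → ℝ, (∀ i, eval p (pderiv i f) = 0) → (hessian n f p).det ≠ 0

theorem nonneg_morse_near_zero_isSumSq_powerSeries
    (n : ℕ) (f : MvPolynomial (Fin n) ℝ)
    (hMorse : IsMorse n f)
    (U : Set (Fin n → ℝ)) (hU : U ∈ nhds (0 : Fin n → ℝ))
    (hnonneg : ∀ x ∈ U, 0 ≤ eval x f)
    (hzero : {x : Fin n → ℝ | eval x f = 0} = {0}) :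
    IsSumSq (f : MvPowerSeries (Fin n) ℝ) := by
  classical
  -- f vanishes at the origin
  have h00 : eval (0 : Fin n → ℝ) f = 0 := by
    have h0mem : (0 : Fin n → ℝ) ∈ ({0} : Set (Fin n → ℝ)) := rfl
    rw [← hzero] at h0mem
    exact h0mem
  obtain ⟨c, L, H, hf⟩ := exists_decomp n f
  have hc : c = 0 := by
    have := h00
    rw [hf] at this
    simpa using this
  -- nonnegativity along lines through the origin
  have hline : ∀ v : Fin n → ℝ, ∀ᶠ t in nhds (0 : ℝ), 0 ≤ ((lineMap n v) f).eval t := by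
    intro v
    have htend : Filter.Tendsto (fun t : ℝ => t • v) (nhds 0) (nhds 0) := by
      have h1 : Filter.Tendsto (fun t : ℝ => t • v) (nhds 0) (nhds ((0:ℝ) • v)) :=
        Filter.tendsto_id.smul_const v
      simpa using h1
    filter_upwards [htend.eventually_mem hU] with t ht
    rw [lineMap_eval]
    exact hnonneg _ ht
  have hval : ∀ v : Fin n → ℝ, ((lineMap n v) f).eval 0 = 0 := by
    intro v
    rw [lineMap_eval, zero_smul]
    exact h00
  -- the linear part vanishes
  have hL : L = 0 := by
    funext i
    have h1 := (oneDim _ (hval (Pi.single i 1)) (hline (Pi.single i 1))).1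
    rw [hf, (lineMap_coeff n (Pi.single i 1) c L H).1] at h1
    have : ∑ j, L j * (Pi.single i (1:ℝ) : Fin n → ℝ) j = L i := by
      rw [Finset.sum_eq_single i]
      · simp
      · intro b _ hb; simp [Pi.single_eq_of_ne hb]
      · simp
    rw [this] at h1
    exact h1
  have hf0 : f = ∑ i, ∑ j, X i * X j * H i j := by
    rw [hf, hc, hL]
    simp
  -- symmetrize
  set Hs : Matrix (Fin n) (Fin n) (MvPolynomial (Fin n) ℝ) :=
    Matrix.of fun i j => C (2⁻¹ : ℝ) * (H i j + H j i) with hHs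
  have hHssym : ∀ i j, Hs i j = Hs j i := by
    intro i j
    simp only [hHs, Matrix.of_apply]
    ring
  have hswap : ∑ i, ∑ j, (X i * X j * H j i : MvPolynomial (Fin n) ℝ)
      = ∑ i, ∑ j, X i * X j * H i j := by
    rw [Finset.sum_comm]
    exact Finset.sum_congr rfl fun i _ => Finset.sum_congr rfl fun j _ => by ring
  have hfs : f = ∑ i, ∑ j, X i * X j * Hs i j := by
    have expand : ∑ i, ∑ j, (X i * X j * Hs i j : MvPolynomial (Fin n) ℝ)
        = C (2⁻¹ : ℝ) * ((∑ i, ∑ j, X i * X j * H i j)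
          + ∑ i, ∑ j, (X i * X j * H j i : MvPolynomial (Fin n) ℝ)) := by
      rw [mul_add, Finset.mul_sum, Finset.mul_sum, ← Finset.sum_add_distrib]
      refine Finset.sum_congr rfl fun i _ => ?_
      rw [Finset.mul_sum, Finset.mul_sum, ← Finset.sum_add_distrib]
      refine Finset.sum_congr rfl fun j _ => ?_
      simp only [hHs, Matrix.of_apply]
      ring
    rw [expand, hswap, ← hf0]
    rw [← two_mul, ← mul_assoc, ← map_ofNat (C : ℝ →+* MvPolynomial (Fin n) ℝ) 2, ← map_mul]
    norm_num
  have hfs' : f = C (0:ℝ) + ∑ i, C ((0 : Fin n → ℝ) i) * X i + ∑ i, ∑ j, X i * X j * Hs i j := by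
    rw [hfs]; simp
  -- the real matrix
  set A : Matrix (Fin n) (Fin n) ℝ := Matrix.of fun i j => eval 0 (Hs i j) with hA
  have hAsym : ∀ i j, A i j = A j i := by
    intro i j
    simp only [hA, Matrix.of_apply]
    rw [hHssym i j]
  have hpsd : ∀ v : Fin n → ℝ, 0 ≤ ∑ i, ∑ j, v i * v j * A i j := by
    intro v
    have h2 := (oneDim _ (hval v) (hline v)).2
    rw [hfs', (lineMap_coeff n v 0 0 Hs).2] at h2
    exact h2
  -- gradient vanishes at the origin
  have hgrad : ∀ k, eval (0 : Fin n → ℝ) (pderiv k f) = 0 := by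
    intro k
    rw [hfs]
    simp [map_sum, eval0_pderiv_quad]
  -- Hessian is 2 • A
  have hcollapse : ∀ (c : Fin n → Fin n → ℝ) (k l : Fin n),
      (∑ i, ∑ j, (if k = i then (1:ℝ) else 0) * (if l = j then 1 else 0) * c i j) = c k l := by
    intro c k l
    have inner : ∀ i, (∑ j, (if k = i then (1:ℝ) else 0) * (if l = j then 1 else 0) * c i j)
        = if k = i then c i l else 0 := by
      intro i
      by_cases hk : k = i
      · simp [hk, Finset.sum_ite_eq]
      · simp [hk]
    rw [Finset.sum_congr rfl fun i _ => inner i]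
    simp [Finset.sum_ite_eq]
  have hhess : hessian n f 0 = fun k l => 2 * A k l := by
    funext k l
    show eval 0 (pderiv l (pderiv k f)) = 2 * A k l
    rw [hfs]
    simp only [map_sum]
    rw [Finset.sum_congr rfl fun i _ => Finset.sum_congr rfl fun j _ =>
      eval0_pderiv2_quad n l k i j (Hs i j)]
    rw [Finset.sum_congr rfl fun i _ => Finset.sum_add_distrib, Finset.sum_add_distrib]
    rw [hcollapse (fun i j => eval 0 (Hs i j)) k l]
    have e2 : ∑ i, ∑ j, ((if k = j then (1:ℝ) else 0) * (if l = i then 1 else 0) * eval 0 (Hs i j))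
        = eval 0 (Hs l k) := by
      rw [Finset.sum_congr rfl fun i _ => Finset.sum_congr rfl fun j _ =>
        (by ring : (if k = j then (1:ℝ) else 0) * (if l = i then 1 else 0) * eval 0 (Hs i j)
          = (if l = i then (1:ℝ) else 0) * (if k = j then 1 else 0) * eval 0 (Hs i j))]
      exact hcollapse (fun i j => eval 0 (Hs i j)) l k
    rw [e2]
    have : eval 0 (Hs k l) = A k l := rfl
    rw [this, show eval 0 (Hs l k) = A l k from rfl, hAsym l k]
    ring
  -- A is positive definite
  have hherm : A.IsHermitian := by
    rw [Matrix.IsHermitian]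
    ext i j
    simp only [Matrix.conjTranspose_apply, star_trivial]
    exact hAsym j i
  have hApsd : A.PosSemidef := by
    refine Matrix.PosSemidef.of_dotProduct_mulVec_nonneg hherm fun x => ?_
    rw [star_trivial, quad_eq]
    exact hpsd x
  have hdetA : A.det ≠ 0 := by
    have hM := hMorse 0 hgrad
    rw [hhess] at hM
    have h2A : (fun k l => 2 * A k l) = (2 : ℝ) • A := by
      funext k l; simp [Matrix.smul_apply]
    rw [h2A, Matrix.det_smul] at hM
    intro h0
    rw [h0, mul_zero] at hM
    exact hM rfl
  have hposdef : A.PosDef := by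
    refine Matrix.PosDef.of_dotProduct_mulVec_pos hherm fun v hv => ?_
    rcases (hpsd v).lt_or_eq with hlt | heq
    · rw [star_trivial, quad_eq]
      exact hlt
    · exfalso
      have hz : dotProduct v (A.mulVec v) = 0 := by rw [quad_eq]; exact heq.symm
      have hz2 : A.mulVec v = 0 := by
        have := (hApsd.dotProduct_mulVec_zero_iff v).mp ?_
        · exact this
        · rw [star_trivial]; exact hz
      exact hdetA (Matrix.exists_mulVec_eq_zero_iff.mp ⟨v, hv, hz2⟩)
  -- move to power series
  have hεcoe : ∀ p : MvPolynomial (Fin n) ℝ,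
      MvPowerSeries.constantCoeff (p : MvPowerSeries (Fin n) ℝ) = eval 0 p := by
    intro p
    rw [eval_zero, constantCoeff_eq, ← MvPolynomial.coeff_coe]
    rfl
  have hcoe : (↑f : MvPowerSeries (Fin n) ℝ)
      = ∑ i, ∑ j, (↑(X i : MvPolynomial (Fin n) ℝ) : MvPowerSeries (Fin n) ℝ)
          * ↑(X j : MvPolynomial (Fin n) ℝ) * ↑(Hs i j) := by
    rw [← MvPolynomial.coeToMvPowerSeries.ringHom_apply, hfs, map_sum]
    refine Finset.sum_congr rfl fun i _ => ?_
    rw [map_sum]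
    refine Finset.sum_congr rfl fun j _ => ?_
    rw [map_mul, map_mul]
    rfl
  have hpos' : Matrix.PosDef (Matrix.of fun i j : Fin n =>
      MvPowerSeries.constantCoeff ((Hs i j : MvPolynomial (Fin n) ℝ)
        : MvPowerSeries (Fin n) ℝ)) := by
    have : (Matrix.of fun i j : Fin n =>
        MvPowerSeries.constantCoeff ((Hs i j : MvPolynomial (Fin n) ℝ)
          : MvPowerSeries (Fin n) ℝ)) = A := by
      ext i j
      simp only [Matrix.of_apply, hεcoe]
      rfl
    rw [this]
    exact hposdef
  have hsymm' : ∀ i j, (Matrix.of fun i j : Fin n => ((Hs i j : MvPolynomial (Fin n) ℝ)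
      : MvPowerSeries (Fin n) ℝ)) i j = (Matrix.of fun i j : Fin n =>
        ((Hs i j : MvPolynomial (Fin n) ℝ) : MvPowerSeries (Fin n) ℝ)) j i := by
    intro i j
    simp only [Matrix.of_apply]
    rw [hHssym i j]
  have := cholesky (MvPowerSeries.constantCoeff)
    (fun r hr => MvPowerSeries.isUnit_iff_constantCoeff.mpr (isUnit_iff_ne_zero.mpr hr))
    (fun r hr => sq_exists n r hr) n
    (Matrix.of fun i j : Fin n => ((Hs i j : MvPolynomial (Fin n) ℝ) : MvPowerSeries (Fin n) ℝ))
    hsymm' hpos'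
    (fun i => ((X i : MvPolynomial (Fin n) ℝ) : MvPowerSeries (Fin n) ℝ))
  rw [hcoe]
  simpa using this
end

section
/- Let m ≥ 3 and a ∈ ℝ. Then the polynomial h(x₁,…,x_m) = x₁² + ⋯ + x_m² + a x₁x₂⋯x_m, regarded as an element of ℝ[[x₁,…,x_m]], is a finite sum of squares of formal power series: h ∈ Σℝ[[x₁,…,x_m]]². -/
open MvPolynomial


private lemma degree_lt_left {σ : Type*} {p q e : σ →₀ ℕ} (h : p + q = e) (hq : q ≠ 0) :
    (p.sum fun _ n => n) < e.sum fun _ n => n := by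
  subst h
  rw [Finsupp.sum_add_index' (fun _ => rfl) (fun _ _ _ => rfl)]
  refine Nat.lt_add_of_pos_right (Nat.pos_of_ne_zero ?_)
  intro h0
  apply hq
  ext s
  by_cases hs : s ∈ q.support
  · exact (Finset.sum_eq_zero_iff.mp h0) s hs
  · simpa using Finsupp.notMem_support_iff.mp hs

noncomputable def sqrtFun {σ : Type*} [DecidableEq σ] (f : MvPowerSeries σ ℝ) (e : σ →₀ ℕ) : ℝ :=
  if e = 0 then 1
  else
    (MvPowerSeries.coeff e f -
      ∑ p ∈ ((Finset.HasAntidiagonal.antidiagonal e).filter (fun p => p.1 ≠ 0 ∧ p.2 ≠ 0)).attach,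
        sqrtFun f p.1.1 * sqrtFun f p.1.2) / 2
termination_by e.sum fun _ n => n
decreasing_by
  · have hp := p.2
    simp only [Finset.mem_filter, Finset.HasAntidiagonal.mem_antidiagonal] at hp
    exact degree_lt_left hp.1 hp.2.2
  · have hp := p.2
    simp only [Finset.mem_filter, Finset.HasAntidiagonal.mem_antidiagonal] at hp
    exact degree_lt_left (by rw [add_comm]; exact hp.1) hp.2.1

lemma sqrtFun_zero {σ : Type*} [DecidableEq σ] (f : MvPowerSeries σ ℝ) : sqrtFun f 0 = 1 := by
  rw [sqrtFun]; simp

noncomputable def sqrtPS {σ : Type*} [DecidableEq σ] (f : MvPowerSeries σ ℝ) :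
    MvPowerSeries σ ℝ :=
  sqrtFun f

lemma coeff_sqrtPS {σ : Type*} [DecidableEq σ] (f : MvPowerSeries σ ℝ) (e : σ →₀ ℕ) :
    MvPowerSeries.coeff e (sqrtPS f) = sqrtFun f e :=
  rfl

lemma sqrtFun_mul_self {σ : Type*} [DecidableEq σ] (f : MvPowerSeries σ ℝ)
    (hf : MvPowerSeries.constantCoeff f = 1) :
    sqrtPS f * sqrtPS f = f := by
  apply MvPowerSeries.ext
  intro e
  rw [MvPowerSeries.coeff_mul]
  simp only [coeff_sqrtPS]
  by_cases he : e = 0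
  · subst he
    rw [← MvPowerSeries.coeff_zero_eq_constantCoeff_apply] at hf
    simp [Finsupp.antidiagonal_zero, sqrtFun_zero, MvPowerSeries.coeff_apply] at hf ⊢
    exact hf.symm
  · have hsplit : Finset.HasAntidiagonal.antidiagonal e =
        insert ((0 : σ →₀ ℕ), e) (insert (e, (0 : σ →₀ ℕ))
          ((Finset.HasAntidiagonal.antidiagonal e).filter fun p => p.1 ≠ 0 ∧ p.2 ≠ 0)) := by
      ext ⟨p1, p2⟩
      simp only [Finset.HasAntidiagonal.mem_antidiagonal, Finset.mem_insert, Finset.mem_filter, Prod.mk.injEq]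
      constructor
      · intro h
        by_cases h1 : p1 = 0
        · left; exact ⟨h1, by rw [← h, h1, zero_add]⟩
        · by_cases h2 : p2 = 0
          · right; left; exact ⟨by rw [← h, h2, add_zero], h2⟩
          · right; right; exact ⟨h, h1, h2⟩
      · rintro (⟨h1, h2⟩ | ⟨h1, h2⟩ | ⟨h, _⟩) <;> simp_all
    have h1 : ((0 : σ →₀ ℕ), e) ∉ insert (e, (0 : σ →₀ ℕ))
        ((Finset.HasAntidiagonal.antidiagonal e).filter fun p => p.1 ≠ 0 ∧ p.2 ≠ 0) := by
      simp [Finset.mem_filter, Prod.ext_iff, he, Ne.symm he]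
    have h2 : (e, (0 : σ →₀ ℕ)) ∉
        ((Finset.HasAntidiagonal.antidiagonal e).filter fun p => p.1 ≠ 0 ∧ p.2 ≠ 0) := by
      simp [Finset.mem_filter]
    rw [hsplit, Finset.sum_insert h1, Finset.sum_insert h2]
    have hge : sqrtFun f e = (MvPowerSeries.coeff e f -
        ∑ p ∈ ((Finset.HasAntidiagonal.antidiagonal e).filter fun p => p.1 ≠ 0 ∧ p.2 ≠ 0),
          sqrtFun f p.1 * sqrtFun f p.2) / 2 := by
      rw [sqrtFun, if_neg he,
        Finset.sum_attach ((Finset.HasAntidiagonal.antidiagonal e).filter fun p => p.1 ≠ 0 ∧ p.2 ≠ 0)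
          (fun q => sqrtFun f q.1 * sqrtFun f q.2)]
    rw [sqrtFun_zero, hge, MvPowerSeries.coeff_apply]
    ring

theorem sum_sq_add_mul_monomial_isSumSq_powerSeries
    (m : ℕ) (hm : 3 ≤ m) (a : ℝ) :
    IsSumSq ((((∑ i, X i ^ 2) + C a * ∏ i, X i : MvPolynomial (Fin m) ℝ)) :
      MvPowerSeries (Fin m) ℝ) := by
  set i0 : Fin m := ⟨0, by omega⟩
  set i1 : Fin m := ⟨1, by omega⟩
  set i2 : Fin m := ⟨2, by omega⟩
  have h01 : i0 ≠ i1 := by simp [i0, i1, Fin.ext_iff]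
  set s : Finset (Fin m) := Finset.univ \ {i0, i1} with hs
  have hi2 : i2 ∈ s := by simp [s, i2, i0, i1, Fin.ext_iff]
  set u : MvPowerSeries (Fin m) ℝ := ∏ i ∈ s, MvPowerSeries.X i with hu
  have hcu : MvPowerSeries.constantCoeff u = 0 := by
    rw [hu, map_prod]
    exact Finset.prod_eq_zero hi2 (MvPowerSeries.constantCoeff_X i2)
  set c : MvPowerSeries (Fin m) ℝ := MvPowerSeries.C (a / 2) with hc
  have hC1 : MvPowerSeries.C a = c + c := by
    rw [hc, ← map_add]; congr 1; ring
  have hC2 : MvPowerSeries.C (a ^ 2 / 4) = c * c := by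
    rw [hc, ← map_mul]; congr 1; ring
  have hcf : MvPowerSeries.constantCoeff (1 - c * c * u ^ 2) = 1 := by
    simp [hc, map_sub, map_mul, map_pow, hcu]
  obtain ⟨g, hg⟩ : ∃ g : MvPowerSeries (Fin m) ℝ, g * g = 1 - c * c * u ^ 2 :=
    ⟨sqrtPS _, sqrtFun_mul_self _ hcf⟩
  -- push the coercion
  have hcoe : ((((∑ i, X i ^ 2) + C a * ∏ i, X i : MvPolynomial (Fin m) ℝ)) :
      MvPowerSeries (Fin m) ℝ) =
      (∑ i, (MvPowerSeries.X i : MvPowerSeries (Fin m) ℝ) ^ 2) +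
        MvPowerSeries.C a * ∏ i, MvPowerSeries.X i := by
    rw [← MvPolynomial.coeToMvPowerSeries.ringHom_apply]
    simp only [map_add, map_sum, map_mul, map_pow, map_prod,
      MvPolynomial.coeToMvPowerSeries.ringHom_apply, MvPolynomial.coe_X, MvPolynomial.coe_C]
  rw [hcoe]
  have hsub : ({i0, i1} : Finset (Fin m)) ⊆ Finset.univ := Finset.subset_univ _
  have hsum : (∑ i, (MvPowerSeries.X i : MvPowerSeries (Fin m) ℝ) ^ 2) =
      (∑ i ∈ s, (MvPowerSeries.X i : MvPowerSeries (Fin m) ℝ) * MvPowerSeries.X i) +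
        (MvPowerSeries.X i0 ^ 2 + MvPowerSeries.X i1 ^ 2) := by
    rw [← Finset.sum_sdiff hsub, ← hs, Finset.sum_pair h01]
    simp [pow_two]
  have hprod : (∏ i, (MvPowerSeries.X i : MvPowerSeries (Fin m) ℝ)) =
      u * (MvPowerSeries.X i0 * MvPowerSeries.X i1) := by
    rw [← Finset.prod_sdiff hsub, ← hs, Finset.prod_pair h01, hu]
  rw [hsum, hprod, hC1]
  set A : MvPowerSeries (Fin m) ℝ := MvPowerSeries.X i0 + c * MvPowerSeries.X i1 * u with hA
  set B : MvPowerSeries (Fin m) ℝ := MvPowerSeries.X i1 * g with hB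
  have key : (∑ i ∈ s, (MvPowerSeries.X i : MvPowerSeries (Fin m) ℝ) * MvPowerSeries.X i) +
        (MvPowerSeries.X i0 ^ 2 + MvPowerSeries.X i1 ^ 2) +
        (c + c) * (u * (MvPowerSeries.X i0 * MvPowerSeries.X i1)) =
      A * A + (B * B +
        ∑ i ∈ s, (MvPowerSeries.X i : MvPowerSeries (Fin m) ℝ) * MvPowerSeries.X i) := by
    rw [hA, hB]
    linear_combination (-(MvPowerSeries.X i1 * MvPowerSeries.X i1)) * hg
  rw [key]
  exact IsSumSq.sq_add A (IsSumSq.sq_add B (IsSumSq.sum_mul_self s _))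
end

section
/- Let G = {(1−x²)³} ⊆ ℝ[x], so that K_G = [−1,1]. The polynomial f = 1 − x² is nonnegative on [−1,1] and has exactly two zeros (x = ±1) in K_G, yet f does not belong to T_G = M_G = {s₀ + s₁(1−x²)³ : s₀, s₁ ∈ Σℝ[x]²}; that is, there exist no sums of squares s₀, s₁ ∈ Σℝ[x]² with 1 − x² = s₀ + s₁(1−x²)³. -/
open Polynomial

lemma sos_eval_nonneg {s : Polynomial ℝ} (hs : IsSumSq s) (x : ℝ) : 0 ≤ eval x s := by
  induction hs with
  | zero => simp
  | @sq_add a S _ ih =>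
    simp only [eval_add, eval_mul]
    nlinarith [mul_self_nonneg (eval x a)]

lemma sos_div {s : Polynomial ℝ} (hs : IsSumSq s) (h1 : eval 1 s = 0) :
    (X - 1 : Polynomial ℝ) ^ 2 ∣ s := by
  induction hs with
  | zero => simp
  | @sq_add a S pS ih =>
    have hS : 0 ≤ eval 1 S := sos_eval_nonneg pS 1
    simp only [eval_add, eval_mul] at h1
    have ha : eval 1 a = 0 := by nlinarith [mul_self_nonneg (eval 1 a)]
    have hSd : eval 1 S = 0 := by nlinarith [mul_self_nonneg (eval 1 a)]
    have hdvd : (X - 1 : Polynomial ℝ) ∣ a := by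
      have := dvd_iff_isRoot (p := a) (a := (1 : ℝ))
      simpa [IsRoot, sub_eq_iff_eq_add] using this.mpr ha
    refine dvd_add ?_ (ih hSd)
    rw [sq]
    exact mul_dvd_mul hdvd hdvd

theorem stengle_counterexample :
    ({x : ℝ | 0 ≤ eval x ((1 - X ^ 2 : Polynomial ℝ) ^ 3)} = Set.Icc (-1 : ℝ) 1) ∧
    (∀ x ∈ Set.Icc (-1 : ℝ) 1, 0 ≤ eval x (1 - X ^ 2 : Polynomial ℝ)) ∧
    ({x ∈ Set.Icc (-1 : ℝ) 1 | eval x (1 - X ^ 2 : Polynomial ℝ) = 0} = {-1, 1}) ∧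
    ¬∃ s₀ s₁ : Polynomial ℝ, IsSumSq s₀ ∧ IsSumSq s₁ ∧
      (1 - X ^ 2 : Polynomial ℝ) = s₀ + s₁ * (1 - X ^ 2 : Polynomial ℝ) ^ 3 := by
  refine ⟨?_, ?_, ?_, ?_⟩
  · ext x
    simp only [Set.mem_setOf_eq, Set.mem_Icc, eval_pow, eval_sub, eval_one, eval_X]
    rw [Odd.pow_nonneg_iff (by decide : Odd 3)]
    exact ⟨fun h => ⟨by nlinarith, by nlinarith⟩, fun h => by nlinarith [h.1, h.2]⟩
  · intro x ⟨h1, h2⟩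
    simp only [eval_sub, eval_one, eval_pow, eval_X]
    nlinarith
  · ext x
    simp only [Set.mem_setOf_eq, Set.mem_Icc, eval_sub, eval_one, eval_pow, eval_X,
      Set.mem_insert_iff, Set.mem_singleton_iff]
    constructor
    · rintro ⟨⟨h1, h2⟩, h⟩
      have : (x - 1) * (x + 1) = 0 := by nlinarith
      rcases mul_eq_zero.mp this with h' | h'
      · right; linarith
      · left; linarith
    · rintro (rfl | rfl) <;> norm_num
  · rintro ⟨s₀, s₁, h₀, h₁, heq⟩
    have he1 : eval 1 s₀ = 0 := by
      have := congrArg (eval 1) heq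
      simp only [eval_add, eval_mul, eval_pow, eval_sub, eval_one, eval_X] at this
      norm_num at this
      linarith [sos_eval_nonneg h₀ 1]
    have hd0 : (X - 1 : Polynomial ℝ) ^ 2 ∣ s₀ := sos_div h₀ he1
    have hdcube : (X - 1 : Polynomial ℝ) ^ 2 ∣ (1 - X ^ 2 : Polynomial ℝ) ^ 3 := by
      have : (X - 1 : Polynomial ℝ) ∣ (1 - X ^ 2) := ⟨-(X + 1), by ring⟩
      calc (X - 1 : Polynomial ℝ) ^ 2 ∣ (1 - X ^ 2) ^ 2 := pow_dvd_pow_of_dvd this 2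
        _ ∣ (1 - X ^ 2) ^ 3 := pow_dvd_pow _ (by norm_num)
    have hdvd : (X - 1 : Polynomial ℝ) ^ 2 ∣ (1 - X ^ 2 : Polynomial ℝ) := by
      rw [heq]; exact dvd_add hd0 (hdcube.mul_left _)
    obtain ⟨q, hq⟩ := hdvd
    have := congrArg (fun p => eval 1 (derivative p)) hq
    simp only [derivative_sub, derivative_one, derivative_pow, derivative_mul, derivative_X,
      eval_add, eval_mul, eval_pow, eval_sub, eval_one, eval_X, derivative_X_sub_C] at this
    norm_num at this
end
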